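/- Let r ≤ m be natural numbers, let f ∈ P(m,r) be nonzero with b = |supp(f)| nonzero evaluations, let F ∈ F₂^{F₂^m} denote the evaluation vector of f, and let w be a natural number with w ≤ 2^m. Consider the set of pairs (v, v') of vectors in F₂^{F₂^m} such that v + v' = F and |v'| ≤ |v| = w (Hamming weights). If 2w < b this set is empty; and if 2w ≥ b, its size is at most 2^b · binom(2^m - b, ≤ ⌊w - b/2⌋). -/

import Mathlib

open Finset

abbrev Cube (m : ℕ) := Fin m → ZMod 2
abbrev BF (m : ℕ) := Cube m → ZMod 2

/-- Codewords of RM(m,r): functions computed by a polynomial of total degree ≤ r. -/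
def RM (m r : ℕ) : Set (BF m) :=
  {f | ∃ p : MvPolynomial (Fin m) (ZMod 2), p.totalDegree ≤ r ∧
    ∀ x, MvPolynomial.eval x p = f x}

/-- Normalized weight of a Boolean function. -/
noncomputable def wt {m : ℕ} (f : BF m) : ℝ :=
  ((univ.filter fun x => f x = 1).card : ℝ) / 2 ^ m

/-- Bias of a Boolean function. -/
noncomputable def bias {m : ℕ} (f : BF m) : ℝ :=
  (∑ x : Cube m, if f x = 0 then (1 : ℝ) else -1) / 2 ^ m

/-- Number of codewords of RM(m,r) of weight at most β. -/
noncomputable def W (m r : ℕ) (β : ℝ) : ℕ :=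
  Set.ncard {f : BF m | f ∈ RM m r ∧ wt f ≤ β}

/-- binom(n, ≤ k) = ∑_{i=0}^k C(n,i). -/
def binomLe (n k : ℕ) : ℕ := ∑ i ∈ Finset.range (k + 1), n.choose i

lemma card_powerset_filter_le {α : Type*} [DecidableEq α] (s : Finset α) (k : ℕ) :
    (s.powerset.filter fun A => A.card ≤ k).card = ∑ i ∈ Finset.range (k+1), s.card.choose i := by
  have h : s.powerset.filter (fun A => A.card ≤ k)
      = (Finset.range (k+1)).biUnion (fun i => s.powersetCard i) := by
    ext A
    simp only [mem_filter, mem_powerset, mem_biUnion, mem_range, mem_powersetCard,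
      Nat.lt_succ_iff]
    constructor
    · rintro ⟨h1, h2⟩; exact ⟨A.card, h2, h1, rfl⟩
    · rintro ⟨i, hi, h1, rfl⟩; exact ⟨h1, hi⟩
  rw [h, card_biUnion]
  · exact Finset.sum_congr rfl fun i _ => card_powersetCard i s
  · intro i _ j _ hij; exact s.pairwise_disjoint_powersetCard hij

lemma hammingNorm_add_le' {m : ℕ} (x y : BF m) :
    hammingNorm (x + y) ≤ hammingNorm x + hammingNorm y := by
  have h := hammingDist_triangle (x + y) y 0
  rw [hammingDist_zero_right, hammingDist_zero_right, hammingDist_eq_hammingNorm] at h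
  have hn : -x = x := by funext i; exact ZMod.neg_eq_self_mod_two (x i)
  simpa [hn] using h

lemma split_card {m : ℕ} (f : BF m) (q : Cube m → Prop) [DecidablePred q] :
    (univ.filter q).card
      = (univ.filter fun x => f x ≠ 0 ∧ q x).card
        + (univ.filter fun x => f x = 0 ∧ q x).card := by
  have h := Finset.card_filter_add_card_filter_not
    (s := (univ : Finset (Cube m)).filter q) (p := fun x => f x ≠ 0)
  simp only [Finset.filter_filter, not_not] at h
  rw [← h]
  congr 1 <;> exact congrArg Finset.card (Finset.filter_congr fun x _ => by tauto)

lemma norm_split {m : ℕ} (f v : BF m) :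
    hammingNorm v
      = (univ.filter fun x => f x ≠ 0 ∧ v x ≠ 0).card
        + (univ.filter fun x => f x = 0 ∧ v x ≠ 0).card := by
  have : hammingNorm v = (univ.filter fun x => v x ≠ 0).card := rfl
  rw [this, split_card f]

lemma norm_add_split {m : ℕ} (f v : BF m) :
    hammingNorm (v + f)
      = (univ.filter fun x => f x ≠ 0 ∧ v x = 0).card
        + (univ.filter fun x => f x = 0 ∧ v x ≠ 0).card := by
  have h0 : hammingNorm (v + f) = (univ.filter fun x => v x + f x ≠ 0).card := rfl
  rw [h0, split_card f]
  have e1 : ∀ a c : ZMod 2, (c ≠ 0 ∧ a + c ≠ 0) ↔ (c ≠ 0 ∧ a = 0) := by decide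
  have e2 : ∀ a c : ZMod 2, (c = 0 ∧ a + c ≠ 0) ↔ (c = 0 ∧ a ≠ 0) := by decide
  congr 1
  · exact congrArg Finset.card (Finset.filter_congr fun x _ => e1 (v x) (f x))
  · exact congrArg Finset.card (Finset.filter_congr fun x _ => e2 (v x) (f x))

lemma norm_f_split {m : ℕ} (f v : BF m) :
    hammingNorm f
      = (univ.filter fun x => f x ≠ 0 ∧ v x ≠ 0).card
        + (univ.filter fun x => f x ≠ 0 ∧ v x = 0).card := by
  have h0 : hammingNorm f = (univ.filter fun x => f x ≠ 0).card := rfl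
  have h := Finset.card_filter_add_card_filter_not
    (s := (univ : Finset (Cube m)).filter fun x => f x ≠ 0) (p := fun x => v x ≠ 0)
  simp only [Finset.filter_filter, not_not] at h
  rw [h0, ← h]

/-- counting pairs of error patterns (v, v') with v + v' equal to
the evaluation vector of a nonzero codeword f with b nonzero evaluations and
|v'| ≤ |v| = w: the set is empty if 2w < b, and otherwise has size at most
2^b · binom(2^m - b, ≤ ⌊w - b/2⌋) (inequality `eq: bad pairs bsc`). -/
theorem bad_pairs_count (m r : ℕ) (hrm : r ≤ m) (f : BF m) (hf : f ∈ RM m r)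
    (hf0 : f ≠ 0) (w : ℕ) (hw : w ≤ 2 ^ m) :
    (2 * w < hammingNorm f →
      {p : BF m × BF m | p.1 + p.2 = f ∧
        hammingNorm p.2 ≤ hammingNorm p.1 ∧ hammingNorm p.1 = w} = ∅) ∧
    (hammingNorm f ≤ 2 * w →
      Set.ncard {p : BF m × BF m | p.1 + p.2 = f ∧
          hammingNorm p.2 ≤ hammingNorm p.1 ∧ hammingNorm p.1 = w} ≤
        2 ^ hammingNorm f *
          binomLe (2 ^ m - hammingNorm f)
            (⌊(w : ℝ) - (hammingNorm f : ℝ) / 2⌋.toNat)) := by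
  classical
  constructor
  · intro hlt
    ext p
    simp only [Set.mem_setOf_eq, Set.mem_empty_iff_false, iff_false, not_and]
    intro hsum hle hw1
    have h1 := hammingNorm_add_le' p.1 p.2
    rw [hsum] at h1
    omega
  · intro hble
    set b := hammingNorm f with hbdef
    set k := (⌊(w : ℝ) - (b : ℝ) / 2⌋).toNat with hkdef
    set σ : Finset (Cube m) := univ.filter (fun x => f x ≠ 0) with hσ
    set T : Finset (Finset (Cube m) × Finset (Cube m)) :=
      σ.powerset ×ˢ (σᶜ.powerset.filter fun A => A.card ≤ k) with hT
    have hσcard : σ.card = b := rfl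
    have hccard : σᶜ.card = 2 ^ m - b := by
      rw [Finset.card_compl, hσcard]
      congr 1
      simp [Fintype.card_fun]
    have hTcard : T.card = 2 ^ b * binomLe (2 ^ m - b) k := by
      rw [hT, Finset.card_product, Finset.card_powerset, hσcard,
        card_powerset_filter_le, hccard, binomLe]
    have hdet : ∀ p : BF m × BF m, p.1 + p.2 = f → p.2 = p.1 + f := by
      intro p hsum
      funext x
      have hx : p.1 x + p.2 x = f x := congrFun hsum x
      have : ∀ a c d : ZMod 2, a + c = d → c = a + d := by decide
      exact this _ _ _ hx
    set Φ : BF m × BF m → Finset (Cube m) × Finset (Cube m) :=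
      fun p => (univ.filter fun x => f x ≠ 0 ∧ p.1 x ≠ 0,
                univ.filter fun x => f x = 0 ∧ p.1 x ≠ 0) with hΦ
    have hmaps : ∀ p ∈ {p : BF m × BF m | p.1 + p.2 = f ∧
        hammingNorm p.2 ≤ hammingNorm p.1 ∧ hammingNorm p.1 = w},
        Φ p ∈ (T : Set (Finset (Cube m) × Finset (Cube m))) := by
      rintro p ⟨hsum, hle, hw1⟩
      have hp2 : p.2 = p.1 + f := hdet p hsum
      rw [hp2] at hle
      simp only [hT, Finset.coe_product, Set.mem_prod, Finset.mem_coe, Finset.mem_powerset,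
        Finset.mem_coe, Finset.mem_filter, Finset.mem_powerset]
      refine ⟨?_, ?_, ?_⟩
      · intro x hx
        simp only [hΦ, Finset.mem_filter, Finset.mem_univ, true_and] at hx
        simp only [hσ, Finset.mem_filter, Finset.mem_univ, true_and]
        exact hx.1
      · intro x hx
        simp only [hΦ, Finset.mem_filter, Finset.mem_univ, true_and] at hx
        simp only [Finset.mem_compl, hσ, Finset.mem_filter, Finset.mem_univ, true_and, not_not]
        exact hx.1
      · have h1 := norm_split f p.1
        have h2 := norm_add_split f p.1
        have h3 := norm_f_split f p.1
        set sA := (univ.filter fun x => f x ≠ 0 ∧ p.1 x ≠ 0).card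
        set sB := (univ.filter fun x => f x = 0 ∧ p.1 x ≠ 0).card
        set sC := (univ.filter fun x => f x ≠ 0 ∧ p.1 x = 0).card
        have hcard2 : 2 * sB + b ≤ 2 * w := by omega
        have hreal : (sB : ℝ) ≤ (w : ℝ) - (b : ℝ) / 2 := by
          have : (2 * sB + b : ℝ) ≤ 2 * w := by exact_mod_cast hcard2
          linarith
        have hint : (sB : ℤ) ≤ ⌊(w : ℝ) - (b : ℝ) / 2⌋ :=
          Int.le_floor.mpr (by push_cast; linarith)
        show sB ≤ k
        omega
    have hinj : Set.InjOn Φ {p : BF m × BF m | p.1 + p.2 = f ∧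
        hammingNorm p.2 ≤ hammingNorm p.1 ∧ hammingNorm p.1 = w} := by
      rintro p ⟨hpsum, -, -⟩ q ⟨hqsum, -, -⟩ heq
      simp only [hΦ, Prod.mk.injEq] at heq
      have h1 : p.1 = q.1 := by
        funext x
        have hA : x ∈ univ.filter (fun x => f x ≠ 0 ∧ p.1 x ≠ 0)
            ↔ x ∈ univ.filter (fun x => f x ≠ 0 ∧ q.1 x ≠ 0) := by rw [heq.1]
        have hB : x ∈ univ.filter (fun x => f x = 0 ∧ p.1 x ≠ 0)
            ↔ x ∈ univ.filter (fun x => f x = 0 ∧ q.1 x ≠ 0) := by rw [heq.2]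
        simp only [Finset.mem_filter, Finset.mem_univ, true_and] at hA hB
        have key : ∀ u v : ZMod 2, (u ≠ 0 ↔ v ≠ 0) → u = v := by decide
        apply key
        by_cases hfx : f x = 0
        · exact ⟨fun h => (hB.mp ⟨hfx, h⟩).2, fun h => (hB.mpr ⟨hfx, h⟩).2⟩
        · exact ⟨fun h => (hA.mp ⟨hfx, h⟩).2, fun h => (hA.mpr ⟨hfx, h⟩).2⟩
      have h2 : p.2 = q.2 := by rw [hdet p hpsum, hdet q hqsum, h1]
      exact Prod.ext h1 h2
    calc Set.ncard {p : BF m × BF m | p.1 + p.2 = f ∧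
          hammingNorm p.2 ≤ hammingNorm p.1 ∧ hammingNorm p.1 = w}
        ≤ (T : Set (Finset (Cube m) × Finset (Cube m))).ncard :=
          Set.ncard_le_ncard_of_injOn Φ hmaps hinj (T.finite_toSet)
      _ = T.card := Set.ncard_coe_finset T
      _ = 2 ^ b * binomLe (2 ^ m - b) k := hTcard
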